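/- arXiv:2210.07939 — 2 statements merged into one kernel-verified Lean document; each statement's English description precedes it below -/
import Mathlib

section
/- Let q > 0, κ > 0 and N > 0 be real numbers, and define f : (0,∞) → ℝ by f(h) = κ h^q + √(2/π) (N h)^{-1/2}. Then f attains its global minimum on (0,∞) at the unique point h_opt = (1/(2π))^{1/(2q+1)} (qκ)^{-2/(2q+1)} N^{-1/(2q+1)}; that is, f(h_opt) ≤ f(h) for all h > 0, with strict inequality for h ≠ h_opt. Moreover, the corresponding optimal sampling time T_opt = N · h_opt equals (1/(2π))^{1/(2q+1)} (qκ)^{-2/(2q+1)} N^{2q/(2q+1)}. -/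
open Real

theorem optimal_timestep_error_model (q κ N : ℝ) (hq : 0 < q) (hκ : 0 < κ) (hN : 0 < N)
    (f : ℝ → ℝ)
    (hf : ∀ h : ℝ, f h = κ * h ^ q + Real.sqrt (2 / Real.pi) * (N * h) ^ (-(1 / 2) : ℝ))
    (hopt : ℝ)
    (hhopt : hopt = (1 / (2 * Real.pi)) ^ ((1 / (2 * q + 1)) : ℝ)
        * (q * κ) ^ ((-(2 / (2 * q + 1))) : ℝ) * N ^ ((-(1 / (2 * q + 1))) : ℝ)) :
    (∀ h : ℝ, 0 < h → f hopt ≤ f h) ∧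
    (∀ h : ℝ, 0 < h → h ≠ hopt → f hopt < f h) ∧
    N * hopt = (1 / (2 * Real.pi)) ^ ((1 / (2 * q + 1)) : ℝ)
        * (q * κ) ^ ((-(2 / (2 * q + 1))) : ℝ) * N ^ ((2 * q / (2 * q + 1)) : ℝ) := by
  have hπ : 0 < Real.pi := Real.pi_pos
  have hp : (0:ℝ) < 2 * q + 1 := by linarith
  set c : ℝ := Real.sqrt (2 / Real.pi) * N ^ ((-(1/2)) : ℝ) with hc
  have hsq : 0 < Real.sqrt (2 / Real.pi) := Real.sqrt_pos.mpr (by positivity)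
  have hcpos : 0 < c := by positivity
  have hopt_pos : 0 < hopt := by rw [hhopt]; positivity
  -- key identity: hopt ^ (q + 1/2)
  have hpow : hopt ^ ((q + 1/2) : ℝ)
      = (1 / (2 * Real.pi)) ^ ((1:ℝ)/2) * (q * κ)⁻¹ * N ^ ((-(1/2)) : ℝ) := by
    rw [hhopt]
    rw [Real.mul_rpow (by positivity) (by positivity),
        Real.mul_rpow (by positivity) (by positivity)]
    rw [← Real.rpow_mul (by positivity : (0:ℝ) ≤ 1 / (2 * Real.pi)),
        ← Real.rpow_mul (by positivity : (0:ℝ) ≤ q * κ),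
        ← Real.rpow_mul (le_of_lt hN)]
    have e1 : (1 / (2 * q + 1)) * (q + 1/2) = (1:ℝ)/2 := by field_simp
    have e2 : (-(2 / (2 * q + 1))) * (q + 1/2) = (-1:ℝ) := by field_simp
    have e3 : (-(1 / (2 * q + 1))) * (q + 1/2) = (-(1/2):ℝ) := by field_simp
    rw [e1, e2, e3, Real.rpow_neg_one]
  -- the critical point equation
  have hkey : κ * q * hopt ^ ((q + 1/2) : ℝ) = c / 2 := by
    have hA : (1 / (2 * Real.pi)) ^ ((1:ℝ)/2) = Real.sqrt (2 / Real.pi) / 2 := by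
      rw [← Real.sqrt_eq_rpow]
      rw [show (1 / (2 * Real.pi)) = (2 / Real.pi) / 4 by field_simp; ring]
      rw [Real.sqrt_div (by positivity) 4]
      rw [show (4:ℝ) = 2 ^ 2 by norm_num, Real.sqrt_sq (by norm_num : (0:ℝ) ≤ 2)]
    rw [hpow, hA, hc]
    field_simp
  -- the auxiliary function
  set g : ℝ → ℝ := fun h => κ * h ^ q + c * h ^ ((-(1/2)) : ℝ) with hgdef
  have hg : ∀ x : ℝ, 0 < x →
      HasDerivAt g (x ^ ((-(3/2)) : ℝ) * (κ * q * x ^ ((q + 1/2) : ℝ) - c / 2)) x := by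
    intro x hx
    have d1 : HasDerivAt (fun y : ℝ => y ^ q) (q * x ^ (q - 1)) x :=
      Real.hasDerivAt_rpow_const (Or.inl hx.ne')
    have d2 : HasDerivAt (fun y : ℝ => y ^ ((-(1/2)) : ℝ))
        ((-(1/2)) * x ^ ((-(1/2) : ℝ) - 1)) x :=
      Real.hasDerivAt_rpow_const (Or.inl hx.ne')
    have hd := (d1.const_mul κ).add (d2.const_mul c)
    convert hd using 1
    · rfl
    · rfl
    · rfl
    have h1 : x ^ (q - 1) = x ^ ((-(3/2)) : ℝ) * x ^ ((q + 1/2) : ℝ) := by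
      rw [← Real.rpow_add hx]; congr 1; ring
    have h2 : x ^ ((-(1/2) : ℝ) - 1) = x ^ ((-(3/2)) : ℝ) := by norm_num
    rw [h1, h2]; ring
  have cont1 : ContinuousOn g (Set.Ioc 0 hopt) :=
    fun x hx => (hg x hx.1).continuousAt.continuousWithinAt
  have cont2 : ContinuousOn g (Set.Ici hopt) :=
    fun x hx => (hg x (lt_of_lt_of_le hopt_pos hx)).continuousAt.continuousWithinAt
  have anti : StrictAntiOn g (Set.Ioc 0 hopt) := by
    apply strictAntiOn_of_deriv_neg (convex_Ioc 0 hopt) cont1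
    rw [interior_Ioc]
    intro x hx
    rw [(hg x hx.1).deriv]
    have hlt : κ * q * x ^ ((q + 1/2) : ℝ) < c / 2 := by
      rw [← hkey]
      exact mul_lt_mul_of_pos_left
        (Real.rpow_lt_rpow hx.1.le hx.2 (by linarith)) (by positivity)
    exact mul_neg_of_pos_of_neg (Real.rpow_pos_of_pos hx.1 _) (by linarith)
  have mono : StrictMonoOn g (Set.Ici hopt) := by
    apply strictMonoOn_of_deriv_pos (convex_Ici hopt) cont2
    rw [interior_Ici]
    intro x hx
    have hx0 : 0 < x := lt_trans hopt_pos hx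
    rw [(hg x hx0).deriv]
    have hlt : c / 2 < κ * q * x ^ ((q + 1/2) : ℝ) := by
      rw [← hkey]
      exact mul_lt_mul_of_pos_left
        (Real.rpow_lt_rpow hopt_pos.le hx (by linarith)) (by positivity)
    exact mul_pos (Real.rpow_pos_of_pos hx0 _) (by linarith)
  have hfg : ∀ h : ℝ, 0 < h → f h = g h := by
    intro h hh
    rw [hf, hgdef]
    simp only []
    rw [Real.mul_rpow hN.le hh.le, hc]
    ring
  have strict : ∀ h : ℝ, 0 < h → h ≠ hopt → f hopt < f h := by
    intro h hh hne
    rw [hfg h hh, hfg hopt hopt_pos]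
    rcases lt_or_gt_of_ne hne with hlt | hgt
    · exact anti ⟨hh, hlt.le⟩ ⟨hopt_pos, le_refl _⟩ hlt
    · exact mono Set.self_mem_Ici (Set.mem_Ici.mpr hgt.le) hgt
  refine ⟨?_, strict, ?_⟩
  · intro h hh
    by_cases he : h = hopt
    · rw [he]
    · exact (strict h hh he).le
  · rw [hhopt]
    rw [show N * ((1 / (2 * Real.pi)) ^ ((1 / (2 * q + 1)) : ℝ)
          * (q * κ) ^ ((-(2 / (2 * q + 1))) : ℝ) * N ^ ((-(1 / (2 * q + 1))) : ℝ))
        = (1 / (2 * Real.pi)) ^ ((1 / (2 * q + 1)) : ℝ)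
          * (q * κ) ^ ((-(2 / (2 * q + 1))) : ℝ)
          * (N ^ (1:ℝ) * N ^ ((-(1 / (2 * q + 1))) : ℝ)) by rw [Real.rpow_one]; ring]
    rw [← Real.rpow_add hN]
    congr 1
    field_simp
    congr 1; ring
end

section
/- Let d ≥ 1 and N ≥ 1 be natural numbers, let K be a natural number, let G_max ≥ 0, let v : Fin N → (Fin d → ℝ) be a family of vectors (local truncation errors), and let φ : Fin N → Fin N → ((Fin d → ℝ) → ℝ) be a family of maps such that for all n, η: (i) |φ(η, n)(v(n))| ≤ G_max · ‖v(n)‖, where ‖·‖ is the sup norm on Fin d → ℝ; (ii) φ(η, n)(v(n)) = 0 whenever η < n or η ≥ n + K. Then |(1/N) · Σ_{n} Σ_{η} φ(η, n)(v(n))| ≤ K · G_max · max_{n} ‖v(n)‖, where both sums run over Fin N and the maximum is over n ∈ Fin N. -/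
open Finset

theorem global_error_bounded_by_local_truncation_error
    (d N : ℕ) (hd : 1 ≤ d) (hN : 1 ≤ N) (K : ℕ) (Gmax : ℝ) (hG : 0 ≤ Gmax)
    (v : Fin N → (Fin d → ℝ))
    (φ : Fin N → Fin N → ((Fin d → ℝ) → ℝ))
    (hbound : ∀ n η : Fin N, |φ η n (v n)| ≤ Gmax * ‖v n‖)
    (hsupp : ∀ n η : Fin N, ((η : ℕ) < (n : ℕ) ∨ (n : ℕ) + K ≤ (η : ℕ)) → φ η n (v n) = 0) :
    |(1 / (N : ℝ)) * ∑ n : Fin N, ∑ η : Fin N, φ η n (v n)|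
      ≤ (K : ℝ) * Gmax
        * (Finset.univ.sup' (Finset.univ_nonempty_iff.mpr ⟨⟨0, hN⟩⟩) fun n : Fin N => ‖v n‖) := by
  set M := (Finset.univ.sup' (Finset.univ_nonempty_iff.mpr ⟨⟨0, hN⟩⟩) fun n : Fin N => ‖v n‖)
    with hM
  have hMnn : 0 ≤ M := le_trans (norm_nonneg (v ⟨0, hN⟩))
    (Finset.le_sup' (fun n : Fin N => ‖v n‖) (Finset.mem_univ ⟨0, hN⟩))
  have hinner : ∀ n : Fin N, |∑ η : Fin N, φ η n (v n)| ≤ (K : ℝ) * (Gmax * M) := by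
    intro n
    set S : Finset (Fin N) :=
      Finset.univ.filter (fun η : Fin N => (n : ℕ) ≤ (η : ℕ) ∧ (η : ℕ) < (n : ℕ) + K)
    have hsum : ∑ η : Fin N, φ η n (v n) = ∑ η ∈ S, φ η n (v n) := by
      refine (Finset.sum_subset (Finset.subset_univ S) ?_).symm
      intro η _ hη
      simp only [S, Finset.mem_filter, Finset.mem_univ, true_and, not_and_or, not_le,
        not_lt] at hη
      exact hsupp n η hη
    rw [hsum]
    calc |∑ η ∈ S, φ η n (v n)| ≤ ∑ η ∈ S, |φ η n (v n)| := Finset.abs_sum_le_sum_abs _ _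
      _ ≤ ∑ η ∈ S, Gmax * M := by
          refine Finset.sum_le_sum fun η _ => (hbound n η).trans ?_
          exact mul_le_mul_of_nonneg_left (Finset.le_sup' (fun n : Fin N => ‖v n‖) (Finset.mem_univ n)) hG
      _ = S.card * (Gmax * M) := by rw [Finset.sum_const, nsmul_eq_mul]
      _ ≤ (K : ℝ) * (Gmax * M) := by
          refine mul_le_mul_of_nonneg_right ?_ (mul_nonneg hG hMnn)
          have : S.card ≤ K := by
            have : S ⊆ Finset.univ.filter
                (fun η : Fin N => (η : ℕ) ∈ Finset.Ico (n : ℕ) ((n : ℕ) + K)) := by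
              intro η hη
              simp only [S, Finset.mem_filter, Finset.mem_univ, true_and] at hη ⊢
              simpa using hη
            calc S.card ≤ _ := Finset.card_le_card this
              _ ≤ (Finset.Ico (n : ℕ) ((n : ℕ) + K)).card :=
                  Finset.card_le_card_of_injOn (fun η => (η : ℕ))
                    (fun η hη => by simpa using (Finset.mem_filter.mp hη).2)
                    (fun a _ b _ h => Fin.ext h)
              _ = K := by simp
          exact_mod_cast this
  have hN0 : (0 : ℝ) < N := by exact_mod_cast hN
  rw [abs_mul]
  have h1 : |(1 / (N : ℝ))| = 1 / N := abs_of_pos (by positivity)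
  rw [h1]
  have h2 : |∑ n : Fin N, ∑ η : Fin N, φ η n (v n)| ≤ (N : ℝ) * ((K : ℝ) * (Gmax * M)) := by
    calc |∑ n : Fin N, ∑ η : Fin N, φ η n (v n)| ≤ ∑ n : Fin N, |∑ η : Fin N, φ η n (v n)| :=
          Finset.abs_sum_le_sum_abs _ _
      _ ≤ ∑ n : Fin N, (K : ℝ) * (Gmax * M) := Finset.sum_le_sum fun n _ => hinner n
      _ = (N : ℝ) * ((K : ℝ) * (Gmax * M)) := by simp [mul_comm]
  calc (1 / (N : ℝ)) * |∑ n : Fin N, ∑ η : Fin N, φ η n (v n)|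
      ≤ (1 / (N : ℝ)) * ((N : ℝ) * ((K : ℝ) * (Gmax * M))) := by
        exact mul_le_mul_of_nonneg_left h2 (by positivity)
    _ = (K : ℝ) * Gmax * M := by field_simp
end
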